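/- For all integers n, j with 0 ≤ 2j ≤ n, there is a bijection between the set of partitions λ of n with |λ_e| = j and the set of ordered pairs (α, β) of partitions such that |α| + |β| = j and β has at most n − 2j parts. -/

import Mathlib

/-- The parts of a partition, listed in weakly decreasing order
(so that the `j`-th entry, `1`-based, is `a_j`). -/
def sortedParts {n : ℕ} (lam : Nat.Partition n) : List ℕ :=
  lam.parts.sort (· ≥ ·)

/-- The sum of the parts of even index `a_2 + a_4 + a_6 + ⋯` of a partition. -/
def evenIndexSum {n : ℕ} (lam : Nat.Partition n) : ℕ :=
  ∑ j ∈ Finset.range (sortedParts lam).length,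
    if (j + 1) % 2 = 0 then (sortedParts lam).getD j 0 else 0

open Multiset YoungDiagram

lemma sortedParts_sorted {n : ℕ} (lam : Nat.Partition n) :
    (sortedParts lam).SortedGE := List.sortedGE_iff_pairwise.2 (Multiset.pairwise_sort _ _)

lemma coe_sortedParts {n : ℕ} (lam : Nat.Partition n) :
    (↑(sortedParts lam) : Multiset ℕ) = lam.parts := Multiset.sort_eq _ _

lemma sortedParts_pos {n : ℕ} (lam : Nat.Partition n) :
    ∀ x ∈ sortedParts lam, 0 < x := fun x hx =>
  lam.parts_pos (by rw [← coe_sortedParts lam]; exact Multiset.mem_coe.2 hx)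

lemma sortedParts_eq {n : ℕ} (lam : Nat.Partition n) {w : List ℕ}
    (hw : w.SortedGE) (h : lam.parts = ↑w) : sortedParts lam = w := by
  refine List.Perm.eq_of_sortedGE (sortedParts_sorted lam) hw ?_
  rw [← Multiset.coe_eq_coe, coe_sortedParts, h]

lemma sortedParts_sum {n : ℕ} (lam : Nat.Partition n) :
    (sortedParts lam).sum = n := by
  rw [← Multiset.sum_coe, coe_sortedParts, lam.parts_sum]

/-- counting odds below c -/
lemma card_filter_odd (c : ℕ) :
    ((Finset.range c).filter (fun i => (i + 1) % 2 = 0)).card = c / 2 := by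
  induction c with
  | zero => simp
  | succ c ih =>
    rw [Finset.range_add_one, Finset.filter_insert]
    by_cases h : (c + 1) % 2 = 0
    · rw [if_pos h, Finset.card_insert_of_notMem (by simp)]
      omega
    · rw [if_neg h]
      omega

lemma list_range_sum (K : ℕ) (f : ℕ → ℕ) :
    ((List.range K).map f).sum = ∑ i ∈ Finset.range K, f i := by
  induction K with
  | zero => simp
  | succ K ih => rw [Finset.sum_range_succ, List.range_succ]; simp [ih]

lemma filter_lt_range {r N : ℕ} (h : r ≤ N) :
    (Finset.range N).filter (fun j => j < r) = Finset.range r := by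
  ext x; simp only [Finset.mem_filter, Finset.mem_range]; omega

lemma sum_rowLens (μ : YoungDiagram) : μ.rowLens.sum = μ.cells.card := by
  have hfib : ∀ c ∈ μ.cells, Prod.fst c ∈ Finset.range (μ.colLen 0) := by
    rintro ⟨i, j⟩ hc
    rw [mem_cells] at hc
    rw [Finset.mem_range, ← mem_iff_lt_colLen]
    exact μ.up_left_mem le_rfl (Nat.zero_le _) hc
  rw [show μ.rowLens.sum = ∑ i ∈ Finset.range (μ.colLen 0), μ.rowLen i from
    list_range_sum _ _, Finset.card_eq_sum_card_fiberwise hfib]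
  refine Finset.sum_congr rfl fun i _ => ?_
  rw [rowLen_eq_card]
  rfl

lemma card_transpose (μ : YoungDiagram) : μ.transpose.cells.card = μ.cells.card := by
  simp [YoungDiagram.transpose]

lemma ofRowLens_congr {w1 w2 : List ℕ} (h1 : w1.SortedGE) (h2 : w2.SortedGE)
    (h : w1 = w2) : ofRowLens w1 h1 = ofRowLens w2 h2 := by subst h; rfl

/-- Partitions of n as Young diagrams with n cells. -/
def partEquiv (n : ℕ) : Nat.Partition n ≃ {μ : YoungDiagram // μ.cells.card = n} where
  toFun lam := ⟨ofRowLens (sortedParts lam) (sortedParts_sorted lam), by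
    rw [← sum_rowLens, rowLens_ofRowLens_eq_self (sortedParts_pos lam), sortedParts_sum]⟩
  invFun μ := ⟨(↑μ.1.rowLens : Multiset ℕ), fun hi => μ.1.pos_of_mem_rowLens _ (by simpa using hi),
    by rw [Multiset.sum_coe, sum_rowLens, μ.2]⟩
  left_inv lam := by
    ext1
    simp only
    rw [rowLens_ofRowLens_eq_self (sortedParts_pos lam), coe_sortedParts]
  right_inv μ := by
    ext1
    dsimp only
    rw [ofRowLens_congr _ (μ.1.rowLens_sorted)
      (sortedParts_eq _ μ.1.rowLens_sorted rfl)]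
    exact ofRowLens_to_rowLens_eq_self

def transposeSub (n : ℕ) : {μ : YoungDiagram // μ.cells.card = n} ≃
    {μ : YoungDiagram // μ.cells.card = n} where
  toFun μ := ⟨μ.1.transpose, by rw [card_transpose, μ.2]⟩
  invFun μ := ⟨μ.1.transpose, by rw [card_transpose, μ.2]⟩
  left_inv μ := by simp
  right_inv μ := by simp

def conj (n : ℕ) : Nat.Partition n ≃ Nat.Partition n :=
  ((partEquiv n).trans (transposeSub n)).trans (partEquiv n).symm

def halfSum {n : ℕ} (μ : Nat.Partition n) : ℕ := (μ.parts.map (· / 2)).sum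

lemma rowLen_eq_zero {μ : YoungDiagram} {i : ℕ} (h : μ.colLen 0 ≤ i) : μ.rowLen i = 0 := by
  by_contra h0
  have h1 : (i, 0) ∈ μ := mem_iff_lt_rowLen.2 (Nat.pos_of_ne_zero h0)
  rw [mem_iff_lt_colLen] at h1
  omega

lemma rowLen_le_card (μ : YoungDiagram) (i : ℕ) : μ.rowLen i ≤ μ.cells.card := by
  rw [rowLen_eq_card]
  exact Finset.card_le_card (Finset.filter_subset _ _)

lemma colLen_le_card (μ : YoungDiagram) (j : ℕ) : μ.colLen j ≤ μ.cells.card := by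
  rw [colLen_eq_card]
  exact Finset.card_le_card (Finset.filter_subset _ _)

lemma sum_boole_lt (N r : ℕ) (h : r ≤ N) :
    ∑ i ∈ Finset.range N, (if i < r then 1 else 0) = r := by
  rw [← Finset.sum_filter]
  simp [filter_lt_range h]

lemma core_swap (μ : YoungDiagram) (N : ℕ) (hr : μ.rowLen 0 ≤ N) (hc : μ.colLen 0 ≤ N) :
    ∑ i ∈ Finset.range N, (if (i + 1) % 2 = 0 then μ.rowLen i else 0)
      = ∑ j ∈ Finset.range N, μ.colLen j / 2 := by
  have hrow : ∀ i, μ.rowLen i = ∑ j ∈ Finset.range N, (if (i, j) ∈ μ then 1 else 0) := by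
    intro i
    have : ∀ j ∈ Finset.range N, (if (i, j) ∈ μ then (1:ℕ) else 0)
        = if j < μ.rowLen i then 1 else 0 := fun j _ => by simp only [mem_iff_lt_rowLen]
    rw [Finset.sum_congr rfl this, sum_boole_lt _ _ ((μ.rowLen_anti 0 i (Nat.zero_le i)).trans hr)]
  have hcol : ∀ j, μ.colLen j / 2
      = ∑ i ∈ Finset.range N, (if (i + 1) % 2 = 0 then (if (i, j) ∈ μ then 1 else 0) else 0) := by
    intro j
    have h1 : ∀ i ∈ Finset.range N, (if (i + 1) % 2 = 0 then (if (i, j) ∈ μ then (1:ℕ) else 0) else 0)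
        = if ((i + 1) % 2 = 0 ∧ i < μ.colLen j) then 1 else 0 := by
      intro i _
      by_cases h : (i + 1) % 2 = 0 <;> by_cases h' : i < μ.colLen j <;>
        simp [h, h', mem_iff_lt_colLen]
    rw [Finset.sum_congr rfl h1, ← Finset.sum_filter]
    have hjc : μ.colLen j ≤ N := (μ.colLen_anti 0 j (Nat.zero_le j)).trans hc
    have h2 : (Finset.range N).filter (fun i => (i + 1) % 2 = 0 ∧ i < μ.colLen j)
        = (Finset.range (μ.colLen j)).filter (fun i => (i + 1) % 2 = 0) := by
      ext x
      simp only [Finset.mem_filter, Finset.mem_range]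
      omega
    simp [h2, card_filter_odd]
  calc ∑ i ∈ Finset.range N, (if (i + 1) % 2 = 0 then μ.rowLen i else 0)
      = ∑ i ∈ Finset.range N, ∑ j ∈ Finset.range N,
          (if (i + 1) % 2 = 0 then (if (i, j) ∈ μ then 1 else 0) else 0) := by
        refine Finset.sum_congr rfl fun i _ => ?_
        by_cases h : (i + 1) % 2 = 0
        · simp only [if_pos h, hrow i]
        · simp [h]
    _ = ∑ j ∈ Finset.range N, μ.colLen j / 2 := by
        rw [Finset.sum_comm]
        exact Finset.sum_congr rfl fun j _ => (hcol j).symm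

lemma length_le_sum (l : List ℕ) (h : ∀ x ∈ l, 0 < x) : l.length ≤ l.sum := by
  induction l with
  | nil => simp
  | cons a t ih =>
    simp only [List.length_cons, List.sum_cons]
    have := h a (by simp)
    have := ih (fun x hx => h x (by simp [hx]))
    omega

lemma key_lemma {n : ℕ} (lam : Nat.Partition n) :
    evenIndexSum lam = halfSum (conj n lam) := by
  set w := sortedParts lam with hw
  set Y := ofRowLens w (sortedParts_sorted lam) with hY
  have hYr : Y.rowLens = w := rowLens_ofRowLens_eq_self (sortedParts_pos lam)
  have hcard : Y.cells.card = n := ((partEquiv n) lam).2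
  have hlen : w.length = Y.colLen 0 := by rw [← hYr]; exact length_rowLens
  have hlenn : w.length ≤ n := by
    have := length_le_sum w (sortedParts_pos lam)
    rwa [sortedParts_sum lam] at this
  -- LHS
  have lhs1 : evenIndexSum lam
      = ∑ i ∈ Finset.range n, (if (i + 1) % 2 = 0 then Y.rowLen i else 0) := by
    rw [evenIndexSum]
    rw [show (sortedParts lam) = w from rfl]
    have step : ∀ i ∈ Finset.range w.length,
        (if (i + 1) % 2 = 0 then w.getD i 0 else 0)
        = (if (i + 1) % 2 = 0 then Y.rowLen i else 0) := by
      intro i hi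
      rw [Finset.mem_range] at hi
      rw [List.getD_eq_getElem _ _ hi, rowLen_ofRowLens ⟨i, hi⟩]
      rfl
    rw [Finset.sum_congr rfl step]
    refine Finset.sum_subset (Finset.range_subset_range.2 hlenn) ?_
    intro i _ hi
    rw [Finset.mem_range, Nat.not_lt] at hi
    rw [rowLen_eq_zero (by omega)]
    simp
  -- RHS
  set T := Y.transpose with hT
  have hparts : (conj n lam).parts = (↑(T.rowLens) : Multiset ℕ) := rfl
  have hTcard : T.cells.card = n := by rw [card_transpose, hcard]
  have rhs1 : halfSum (conj n lam) = ∑ i ∈ Finset.range n, Y.colLen i / 2 := by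
    rw [halfSum, hparts, Multiset.map_coe, Multiset.sum_coe]
    rw [show T.rowLens = (List.range (T.colLen 0)).map T.rowLen from rfl]
    rw [List.map_map, list_range_sum]
    have step : ∀ i ∈ Finset.range (T.colLen 0),
        ((· / 2) ∘ T.rowLen) i = Y.colLen i / 2 := by
      intro i _
      simp only [Function.comp_apply]
      rw [hT, rowLen_transpose]
    rw [Finset.sum_congr rfl step]
    refine Finset.sum_subset (Finset.range_subset_range.2 ((colLen_le_card T 0).trans hTcard.le)) ?_
    intro i _ hi
    rw [Finset.mem_range, Nat.not_lt] at hi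
    have : Y.colLen i = 0 := by
      rw [← rowLen_transpose, ← hT]
      exact rowLen_eq_zero hi
    simp [this]
  rw [lhs1, rhs1]
  exact core_swap Y n ((rowLen_le_card Y 0).trans hcard.le)
    ((colLen_le_card Y 0).trans hcard.le)

lemma sum_eq_two_half (s : Multiset ℕ) :
    s.sum = 2 * (s.map (· / 2)).sum + Multiset.card (s.filter (fun p => p % 2 = 1)) := by
  induction s using Multiset.induction with
  | empty => simp
  | cons a s ih =>
    by_cases h : a % 2 = 1 <;> simp [Multiset.filter_cons, h] <;> omega

lemma sum_map_two_add_one (s : Multiset ℕ) :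
    (s.map (fun x => 2 * x + 1)).sum = 2 * s.sum + Multiset.card s := by
  induction s using Multiset.induction with
  | empty => simp
  | cons a s ih => simp only [Multiset.map_cons, Multiset.sum_cons, Multiset.card_cons, ih]; omega

lemma sigma_part_eq {a a' : ℕ} {P : Nat.Partition a} {P' : Nat.Partition a'}
    (h : P.parts = P'.parts) : (⟨a, P⟩ : Σ a : ℕ, Nat.Partition a) = ⟨a', P'⟩ := by
  have ha : a = a' := by rw [← P.parts_sum, ← P'.parts_sum, h]
  subst ha
  exact congrArg _ (Nat.Partition.ext h)

section Split

variable (n j : ℕ)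

/-- the target type -/
abbrev Tgt := {q : (Σ a : ℕ, Nat.Partition a) × (Σ b : ℕ, Nat.Partition b) //
    q.1.1 + q.2.1 = j ∧ q.2.2.parts.card ≤ n - 2 * j}

lemma od_card {μ : Nat.Partition n} (hμ : halfSum μ = j) :
    Multiset.card (μ.parts.filter (fun p => p % 2 = 1)) = n - 2 * j := by
  have := sum_eq_two_half μ.parts
  rw [μ.parts_sum, show (μ.parts.map (· / 2)).sum = j from hμ] at this
  omega

/-- forward map: split by parity, halve -/
def splitFun (x : {μ : Nat.Partition n // halfSum μ = j}) : Tgt n j := by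
  refine ⟨⟨⟨((x.1.parts.filter (fun p => ¬ p % 2 = 1)).map (· / 2)).sum,
      ⟨(x.1.parts.filter (fun p => ¬ p % 2 = 1)).map (· / 2), ?_, rfl⟩⟩,
    ⟨((x.1.parts.filter (fun p => p % 2 = 1)).map (· / 2)).sum,
      Nat.Partition.ofSums _ ((x.1.parts.filter (fun p => p % 2 = 1)).map (· / 2)) rfl⟩⟩,
    ?_, ?_⟩
  · intro i hi
    rw [Multiset.mem_map] at hi
    obtain ⟨p, hp, rfl⟩ := hi
    rw [Multiset.mem_filter] at hp
    have := x.1.parts_pos hp.1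
    have := hp.2
    omega
  · have hs : halfSum x.1 = j := x.2
    rw [halfSum] at hs
    conv_rhs => rw [← hs, ← Multiset.filter_add_not (fun p => p % 2 = 1) x.1.parts]
    rw [Multiset.map_add, Multiset.sum_add]
    exact Nat.add_comm _ _
  · rw [Nat.Partition.ofSums_parts, ← od_card n j x.2]
    calc Multiset.card (Multiset.filter (fun x => x ≠ 0) _)
        ≤ Multiset.card ((x.1.parts.filter (fun p => p % 2 = 1)).map (· / 2)) :=
          Multiset.card_le_card (Multiset.filter_le _ _)
      _ = _ := by rw [Multiset.card_map]

variable (hj : 2 * j ≤ n)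

/-- backward map -/
def combFun (y : Tgt n j) : {μ : Nat.Partition n // halfSum μ = j} := by
  refine ⟨⟨y.1.1.2.parts.map (fun x => 2 * x) + y.1.2.2.parts.map (fun x => 2 * x + 1)
      + Multiset.replicate (n - 2 * j - Multiset.card y.1.2.2.parts) 1, ?_, ?_⟩, ?_⟩
  · intro i hi
    rw [Multiset.mem_add, Multiset.mem_add] at hi
    rcases hi with (hi | hi) | hi
    · rw [Multiset.mem_map] at hi
      obtain ⟨p, hp, rfl⟩ := hi
      have := y.1.1.2.parts_pos hp
      omega
    · rw [Multiset.mem_map] at hi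
      obtain ⟨p, hp, rfl⟩ := hi
      omega
    · rw [Multiset.eq_of_mem_replicate hi]
      omega
  · rw [Multiset.sum_add, Multiset.sum_add, Multiset.sum_replicate, smul_eq_mul, mul_one]
    rw [Multiset.sum_map_mul_left, Multiset.map_id', y.1.1.2.parts_sum]
    rw [sum_map_two_add_one, y.1.2.2.parts_sum]
    have h1 := y.2.1
    have h2 := y.2.2
    omega
  · rw [halfSum]
    simp only [Multiset.map_add, Multiset.sum_add, Multiset.map_map, Multiset.map_replicate]
    rw [Multiset.map_congr (f := (· / 2) ∘ (fun x => 2 * x)) rfl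
      (fun x _ => show 2 * x / 2 = x by omega), Multiset.map_id']
    rw [Multiset.map_congr (f := (· / 2) ∘ (fun x => 2 * x + 1)) rfl
      (fun x _ => show (2 * x + 1) / 2 = x by omega), Multiset.map_id']
    rw [y.1.1.2.parts_sum, y.1.2.2.parts_sum]
    simp [y.2.1]

end Split

lemma split_left_inv {n j : ℕ} (hj : 2 * j ≤ n) (x : {μ : Nat.Partition n // halfSum μ = j}) :
    combFun n j hj (splitFun n j x) = x := by
  apply Subtype.ext
  apply Nat.Partition.ext
  set s := x.1.parts with hsdef
  set od := s.filter (fun p => p % 2 = 1) with hod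
  set ev := s.filter (fun p => ¬ p % 2 = 1) with hev
  set od1 := od.filter (fun p => p / 2 ≠ 0) with hod1
  set od2 := od.filter (fun p => ¬ p / 2 ≠ 0) with hod2
  have hsplit : od + ev = s := Multiset.filter_add_not _ _
  have hodsplit : od1 + od2 = od := Multiset.filter_add_not _ _
  have hA : Multiset.map (fun x => 2 * x) (ev.map (· / 2)) = ev := by
    rw [Multiset.map_map]
    refine (Multiset.map_congr rfl fun p hp => ?_).trans (Multiset.map_id' ev)
    rw [hev, Multiset.mem_filter] at hp
    have := hp.2
    simp only [Function.comp_apply]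
    omega
  have hbparts : (od.map (· / 2)).filter (fun x => x ≠ 0) = od1.map (· / 2) := by
    rw [Multiset.filter_map]
    rfl
  have hB : Multiset.map (fun x => 2 * x + 1) (od1.map (· / 2)) = od1 := by
    rw [Multiset.map_map]
    refine (Multiset.map_congr rfl fun p hp => ?_).trans (Multiset.map_id' od1)
    rw [hod1, Multiset.mem_filter, hod, Multiset.mem_filter] at hp
    have := hp.1.2
    simp only [Function.comp_apply]
    omega
  have hodc : Multiset.card od = n - 2 * j := od_card n j x.2
  have hcards : Multiset.card od1 + Multiset.card od2 = Multiset.card od := by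
    rw [← Multiset.card_add, hodsplit]
  have hR : Multiset.replicate (n - 2 * j -
      Multiset.card ((od.map (· / 2)).filter (fun x => x ≠ 0))) 1 = od2 := by
    rw [hbparts, Multiset.card_map]
    have hk : n - 2 * j - Multiset.card od1 = Multiset.card od2 := by omega
    rw [hk]
    symm
    rw [Multiset.eq_replicate]
    refine ⟨rfl, fun b hb => ?_⟩
    rw [hod2, Multiset.mem_filter, hod, Multiset.mem_filter] at hb
    have := hb.1.2
    have := hb.2
    omega
  show Multiset.map (fun x => 2 * x) (ev.map (· / 2))
      + Multiset.map (fun x => 2 * x + 1) ((od.map (· / 2)).filter (fun x => x ≠ 0))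
      + Multiset.replicate (n - 2 * j -
          Multiset.card ((od.map (· / 2)).filter (fun x => x ≠ 0))) 1 = s
  rw [hA, hR, hbparts, hB, add_assoc, hodsplit, add_comm ev od, hsplit]

lemma split_right_inv {n j : ℕ} (hj : 2 * j ≤ n) (y : Tgt n j) :
    splitFun n j (combFun n j hj y) = y := by
  obtain ⟨⟨⟨a, α⟩, ⟨b, β⟩⟩, hab, hcard⟩ := y
  apply Subtype.ext
  set k := n - 2 * j - Multiset.card β.parts with hk
  set αm := α.parts.map (fun x => 2 * x) with hαm
  set βm := β.parts.map (fun x => 2 * x + 1) with hβm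
  set R := Multiset.replicate k 1 with hR
  set s := αm + βm + R with hs
  have hev : s.filter (fun p => ¬ p % 2 = 1) = αm := by
    rw [hs, Multiset.filter_add, Multiset.filter_add]
    rw [Multiset.filter_eq_self.2 (fun c hc => by
      rw [hαm, Multiset.mem_map] at hc; obtain ⟨p, _, rfl⟩ := hc; omega)]
    rw [Multiset.filter_eq_nil.2 (fun c hc => by
      rw [hβm, Multiset.mem_map] at hc; obtain ⟨p, _, rfl⟩ := hc; omega)]
    rw [Multiset.filter_eq_nil.2 (fun c hc => by
      rw [hR] at hc; rw [Multiset.eq_of_mem_replicate hc]; omega)]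
    simp
  have hodd : s.filter (fun p => p % 2 = 1) = βm + R := by
    rw [hs, Multiset.filter_add, Multiset.filter_add]
    rw [Multiset.filter_eq_nil.2 (fun c hc => by
      rw [hαm, Multiset.mem_map] at hc; obtain ⟨p, _, rfl⟩ := hc; omega)]
    rw [Multiset.filter_eq_self.2 (fun c hc => by
      rw [hβm, Multiset.mem_map] at hc; obtain ⟨p, _, rfl⟩ := hc; omega)]
    rw [Multiset.filter_eq_self.2 (fun c hc => by
      rw [hR] at hc; rw [Multiset.eq_of_mem_replicate hc])]
    simp
  have hα : (s.filter (fun p => ¬ p % 2 = 1)).map (· / 2) = α.parts := by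
    rw [hev, hαm, Multiset.map_map]
    exact (Multiset.map_congr rfl fun p _ => by simp only [Function.comp_apply]; omega).trans
      (Multiset.map_id' _)
  have hβ : ((s.filter (fun p => p % 2 = 1)).map (· / 2)).filter (fun x => x ≠ 0) = β.parts := by
    rw [hodd, Multiset.map_add, Multiset.filter_add]
    have h1 : βm.map (· / 2) = β.parts := by
      rw [hβm, Multiset.map_map]
      exact (Multiset.map_congr rfl fun p _ => by simp only [Function.comp_apply]; omega).trans
        (Multiset.map_id' _)
    have h2 : R.map (· / 2) = Multiset.replicate k 0 := by
      rw [hR, Multiset.map_replicate]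
    rw [h1, h2]
    rw [Multiset.filter_eq_self.2 (fun c hc => (β.parts_pos hc).ne')]
    rw [Multiset.filter_eq_nil.2 (fun c hc => by rw [Multiset.eq_of_mem_replicate hc]; simp)]
    simp
  apply Prod.ext
  · exact sigma_part_eq hα
  · exact sigma_part_eq hβ

/-- The splitting equivalence. -/
def splitEquiv (n j : ℕ) (hj : 2 * j ≤ n) :
    {μ : Nat.Partition n // halfSum μ = j} ≃ Tgt n j where
  toFun := splitFun n j
  invFun := combFun n j hj
  left_inv := split_left_inv hj
  right_inv := split_right_inv hj

theorem stmt_3 (n j : ℕ) (hj : 2 * j ≤ n) :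
    Nonempty
      ({lam : Nat.Partition n // evenIndexSum lam = j} ≃
        {q : (Σ a : ℕ, Nat.Partition a) × (Σ b : ℕ, Nat.Partition b) //
          q.1.1 + q.2.1 = j ∧ q.2.2.parts.card ≤ n - 2 * j}) := by
  refine ⟨Equiv.trans ?_ (splitEquiv n j hj)⟩
  exact (conj n).subtypeEquiv fun lam => by rw [key_lemma lam]
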